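/- Fix real numbers T > 0 and M > 0, and fix constants a0 ≥ 2 and m0 with a0 < m0 < a0 + 2. Then for all M̃1, M̃2 ∈ ℝ there exist λ0 > 0 and C > 0 such that for every λ ≥ λ0, every s ≥ 1 and every t ∈ (0,T): s^{M̃1} · λ^{M̃2} · e^{−4 s α̂(t) − 2 a0 s α*(t)} · ξ̂(t)^{M̃1} ≤ C · s^{−1} · e^{−2 m0 s α*(t)} · ξ̂(t)^{−1}. -/

import Mathlib

/-- The Carleman weight `α*(t) = (e^{12λM} − e^{10λM})/(t(T−t))⁵`. -/
noncomputable def alphaStar (T M lam t : ℝ) : ℝ :=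
  (Real.exp (12 * lam * M) - Real.exp (10 * lam * M)) / (t * (T - t)) ^ 5

/-- The Carleman weight `α̂(t) = (e^{12λM} − e^{11λM})/(t(T−t))⁵`. -/
noncomputable def alphaHat (T M lam t : ℝ) : ℝ :=
  (Real.exp (12 * lam * M) - Real.exp (11 * lam * M)) / (t * (T - t)) ^ 5

/-- The Carleman weight `ξ̂(t) = e^{11λM}/(t(T−t))⁵`. -/
noncomputable def xiHat (T M lam t : ℝ) : ℝ :=
  Real.exp (11 * lam * M) / (t * (T - t)) ^ 5

lemma pow_le_factorial_mul_exp (y : ℝ) (hy : 0 ≤ y) (n : ℕ) :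
    y ^ n ≤ n.factorial * Real.exp y := by
  have h := Real.pow_div_factorial_le_exp y hy n
  have hf : (0 : ℝ) < n.factorial := by positivity
  rw [div_le_iff₀ hf] at h
  linarith [h]

/-- Lemma A.2 of the paper (pointwise weight comparison): for `a0 ≥ 2` and
`a0 < m0 < a0 + 2`, the weight `s^{M̃1} λ^{M̃2} e^{−4sα̂ − 2a0 sα*} ξ̂^{M̃1}` is
dominated by `C s^{−1} e^{−2m0 sα*} ξ̂^{−1}`. -/
theorem weight_comparison_lemmaA2 (T M : ℝ) (hT : 0 < T) (hM : 0 < M)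
    (a0 m0 : ℝ) (ha0 : 2 ≤ a0) (hm0 : a0 < m0) (hm0' : m0 < a0 + 2) :
    ∀ M1 M2 : ℝ, ∃ lam0 > (0 : ℝ), ∃ C > (0 : ℝ),
      ∀ lam ≥ lam0, ∀ s ≥ (1 : ℝ), ∀ t ∈ Set.Ioo (0 : ℝ) T,
        s ^ M1 * lam ^ M2 *
            Real.exp (-4 * s * alphaHat T M lam t - 2 * a0 * s * alphaStar T M lam t) *
            (xiHat T M lam t) ^ M1 ≤
          C * s ^ (-1 : ℝ) * Real.exp (-2 * m0 * s * alphaStar T M lam t) *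
            (xiHat T M lam t) ^ (-1 : ℝ) := by
  intro M1 M2
  set K : ℝ := (T ^ 2 / 4) ^ 5 with hKdef
  have hK : 0 < K := by positivity
  set c : ℝ := 11 * M / K with hcdef
  have hc : 0 < c := by positivity
  set n : ℕ := ⌈M1 + 1⌉₊ with hndef
  set m : ℕ := ⌈M2⌉₊ with hmdef
  refine ⟨1 + K / (11 * M) + |Real.log (8 / (4 - 2 * (m0 - a0)))| / M, by positivity,
    (n.factorial * (m.factorial / c ^ m)), by positivity, ?_⟩
  intro lam hlam s hs t ht
  obtain ⟨ht0, htT⟩ := ht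
  have hP : 0 < t * (T - t) := by nlinarith
  have hP5 : 0 < (t * (T - t)) ^ 5 := by positivity
  have hPK : (t * (T - t)) ^ 5 ≤ K := by
    apply pow_le_pow_left₀ hP.le
    nlinarith [sq_nonneg (t - (T - t))]
  have hlam1 : (1 : ℝ) ≤ lam := by
    have h1 : (0:ℝ) ≤ K / (11 * M) := by positivity
    have h2 : (0:ℝ) ≤ |Real.log (8 / (4 - 2 * (m0 - a0)))| / M := by positivity
    linarith
  have hlam0 : (0 : ℝ) < lam := by linarith
  have hs0 : (0 : ℝ) < s := by linarith
  have hlamK : K / (11 * M) ≤ lam := by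
    have h2 : (0:ℝ) ≤ |Real.log (8 / (4 - 2 * (m0 - a0)))| / M := by positivity
    linarith
  have hε : 0 < m0 - a0 := by linarith
  have hε2 : m0 - a0 < 2 := by linarith
  have h8 : (0:ℝ) < 8 / (4 - 2 * (m0 - a0)) := by
    apply div_pos (by norm_num); linarith
  -- (4 - 2ε) * exp(lam*M) ≥ 8
  have hexp8 : 8 ≤ (4 - 2 * (m0 - a0)) * Real.exp (lam * M) := by
    have hl : Real.log (8 / (4 - 2 * (m0 - a0))) ≤ lam * M := by
      have h1 : |Real.log (8 / (4 - 2 * (m0 - a0)))| / M ≤ lam := by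
        have h1 : (0:ℝ) ≤ K / (11 * M) := by positivity
        linarith
      have := (div_le_iff₀ hM).mp h1
      calc Real.log (8 / (4 - 2 * (m0 - a0)))
          ≤ |Real.log (8 / (4 - 2 * (m0 - a0)))| := le_abs_self _
        _ ≤ lam * M := this
    have h2 := Real.exp_le_exp.mpr hl
    rw [Real.exp_log h8, div_le_iff₀ (by linarith : (0:ℝ) < 4 - 2 * (m0 - a0))] at h2
    linarith [h2]
  set A := Real.exp (12 * lam * M) with hA
  set B := Real.exp (11 * lam * M) with hB
  set D := Real.exp (10 * lam * M) with hD
  have hApos : 0 < A := Real.exp_pos _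
  have hBpos : 0 < B := Real.exp_pos _
  have hDpos : 0 < D := Real.exp_pos _
  have hAB : A = B * Real.exp (lam * M) := by
    rw [hA, hB, ← Real.exp_add]; ring_nf
  -- numerator inequality
  have hnum : -4 * s * (A - B) - 2 * a0 * s * (A - D) + 2 * m0 * s * (A - D) ≤ -4 * (s * B) := by
    have h1 : 8 * B ≤ (4 - 2 * (m0 - a0)) * A := by
      rw [hAB]
      calc 8 * B ≤ ((4 - 2 * (m0 - a0)) * Real.exp (lam * M)) * B :=
            mul_le_mul_of_nonneg_right hexp8 hBpos.le
        _ = (4 - 2 * (m0 - a0)) * (B * Real.exp (lam * M)) := by ring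
    have hcoef : (2 * (m0 - a0) - 4) * A + 8 * B - 2 * (m0 - a0) * D ≤ 0 := by
      nlinarith [mul_pos hε hDpos, h1]
    have h2 : s * ((2 * (m0 - a0) - 4) * A + 8 * B - 2 * (m0 - a0) * D) ≤ 0 :=
      mul_nonpos_iff.mpr (Or.inl ⟨hs0.le, hcoef⟩)
    have h3 : -4 * s * (A - B) - 2 * a0 * s * (A - D) + 2 * m0 * s * (A - D) + 4 * (s * B)
        = s * ((2 * (m0 - a0) - 4) * A + 8 * B - 2 * (m0 - a0) * D) := by ring
    linarith [h2, h3.le, h3.ge]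
  set θ := 2 * m0 * s * alphaStar T M lam t with hθ
  set x := s * xiHat T M lam t with hx
  have hxipos : 0 < xiHat T M lam t := by
    rw [xiHat]; positivity
  have hx0 : 0 < x := mul_pos hs0 hxipos
  -- exponent inequality
  have hG : -4 * s * alphaHat T M lam t - 2 * a0 * s * alphaStar T M lam t + θ ≤ -4 * x := by
    rw [hθ, hx, alphaHat, alphaStar, xiHat]
    rw [show -4 * s * ((A - B) / (t * (T - t)) ^ 5) - 2 * a0 * s * ((A - D) / (t * (T - t)) ^ 5)
        + 2 * m0 * s * ((A - D) / (t * (T - t)) ^ 5)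
        = (-4 * s * (A - B) - 2 * a0 * s * (A - D) + 2 * m0 * s * (A - D)) / (t * (T - t)) ^ 5 by ring]
    rw [show -4 * (s * (B / (t * (T - t)) ^ 5)) = (-4 * (s * B)) / (t * (T - t)) ^ 5 by ring]
    exact div_le_div_of_nonneg_right hnum hP5.le |>.trans_eq rfl
  -- lower bound on x
  have hxc : c * lam ≤ x := by
    have h1 : 11 * lam * M ≤ B := by
      rw [hB]; linarith [Real.add_one_le_exp (11 * lam * M)]
    have h2 : B / K ≤ B / (t * (T - t)) ^ 5 :=
      div_le_div_of_nonneg_left hBpos.le hP5 hPK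
    have h3 : 11 * lam * M / K ≤ B / K := div_le_div_of_nonneg_right h1 hK.le
    have h4 : c * lam = 11 * lam * M / K := by rw [hcdef]; ring
    have h5 : xiHat T M lam t = B / (t * (T - t)) ^ 5 := rfl
    have h6 : xiHat T M lam t ≤ x := by
      rw [hx]; exact le_mul_of_one_le_left hxipos.le hs
    rw [h4]; rw [h5] at h6; linarith
  have hx1 : 1 ≤ x := by
    have : c * (K / (11 * M)) = 1 := by
      rw [hcdef, div_mul_div_comm, mul_comm (11 * M) K]; exact div_self (by positivity)
    calc (1:ℝ) = c * (K / (11 * M)) := this.symm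
      _ ≤ c * lam := by apply mul_le_mul_of_nonneg_left hlamK hc.le
      _ ≤ x := hxc
  -- main bound
  set G0 := -4 * s * alphaHat T M lam t - 2 * a0 * s * alphaStar T M lam t with hG0
  have hmain : x ^ (M1 + 1) * lam ^ M2 * Real.exp (G0 + θ)
      ≤ (n.factorial : ℝ) * ((m.factorial : ℝ) / c ^ m) := by
    have e1 : x ^ (M1 + 1) ≤ (n.factorial : ℝ) * Real.exp x :=
      calc x ^ (M1 + 1) ≤ x ^ (n : ℝ) :=
            Real.rpow_le_rpow_of_exponent_le hx1 (Nat.le_ceil _)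
        _ = x ^ n := Real.rpow_natCast x n
        _ ≤ _ := pow_le_factorial_mul_exp x hx0.le n
    have e2 : lam ^ M2 ≤ ((m.factorial : ℝ) / c ^ m) * Real.exp x :=
      calc lam ^ M2 ≤ lam ^ (m : ℝ) :=
            Real.rpow_le_rpow_of_exponent_le hlam1 (Nat.le_ceil _)
        _ = lam ^ m := Real.rpow_natCast lam m
        _ = (c * lam) ^ m / c ^ m := by
            rw [mul_pow]; field_simp
        _ ≤ ((m.factorial : ℝ) * Real.exp (c * lam)) / c ^ m :=
            div_le_div_of_nonneg_right
              (pow_le_factorial_mul_exp (c * lam) (by positivity) m) (pow_pos hc m).le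
        _ = ((m.factorial : ℝ) / c ^ m) * Real.exp (c * lam) := by ring
        _ ≤ ((m.factorial : ℝ) / c ^ m) * Real.exp x := by
            exact mul_le_mul_of_nonneg_left (Real.exp_le_exp.mpr hxc) (by positivity)
    have e3 : Real.exp (G0 + θ) ≤ Real.exp (-(4 * x)) := by
      apply Real.exp_le_exp.mpr; rw [hG0]; linarith [hG]
    calc x ^ (M1 + 1) * lam ^ M2 * Real.exp (G0 + θ)
        ≤ ((n.factorial : ℝ) * Real.exp x) * (((m.factorial : ℝ) / c ^ m) * Real.exp x)
            * Real.exp (-(4 * x)) := by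
          apply mul_le_mul (mul_le_mul e1 e2 (by positivity) (by positivity)) e3
            (Real.exp_pos _).le (by positivity)
      _ = ((n.factorial : ℝ) * ((m.factorial : ℝ) / c ^ m)) * Real.exp (x + (x + -(4 * x))) := by
          rw [Real.exp_add, Real.exp_add]; ring
      _ ≤ ((n.factorial : ℝ) * ((m.factorial : ℝ) / c ^ m)) * 1 :=
          mul_le_mul_of_nonneg_left (Real.exp_le_one_iff.mpr (by linarith)) (by positivity)
      _ = _ := mul_one _
  have hθeq : -2 * m0 * s * alphaStar T M lam t = -θ := by rw [hθ]; ring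
  rw [hθeq]
  have hexpne : Real.exp θ ≠ 0 := (Real.exp_pos _).ne'
  calc s ^ M1 * lam ^ M2 * Real.exp G0 * (xiHat T M lam t) ^ M1
      = (x ^ (M1 + 1) * lam ^ M2 * Real.exp (G0 + θ)) * (x ^ (-1 : ℝ) * Real.exp (-θ)) := by
        rw [Real.rpow_add hx0, Real.rpow_one, Real.rpow_neg_one, Real.exp_add, Real.exp_neg,
          hx, Real.mul_rpow hs0.le hxipos.le]
        field_simp
    _ ≤ ((n.factorial : ℝ) * ((m.factorial : ℝ) / c ^ m)) * (x ^ (-1 : ℝ) * Real.exp (-θ)) := by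
        apply mul_le_mul_of_nonneg_right hmain
        positivity
    _ = (n.factorial : ℝ) * ((m.factorial : ℝ) / c ^ m) * s ^ (-1 : ℝ) * Real.exp (-θ) *
          (xiHat T M lam t) ^ (-1 : ℝ) := by
        rw [Real.rpow_neg_one, Real.rpow_neg_one, Real.rpow_neg_one, hx, mul_inv]
        ring
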